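/- Let x ∈ ℝ^m be nonzero, η, λ, n > 0 with ηλ < 1 and ‖(η/n) x xᵀ‖₂ > 1/2 · 1/(1 - ηλ). For the binomial expansion of ((1-ηλ)I - (2η/n) x xᵀ)^t, the term with index k = t/2 (t even), namely binom(t, t/2)(1-ηλ)^{t/2}(-(2η/n) x xᵀ)^{t/2}, has operator norm tending to infinity as t → ∞. Hence the coefficient sequence of the monomial p^t in the provenance expansion does not converge. -/

import Mathlib

open scoped Matrix

set_option synthInstance.maxHeartbeats 400000 in
set_option maxHeartbeats 1000000 in
/-- Non-convergence of provenance coefficients: for `x ≠ 0`, `η, λ, n > 0`,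
`ηλ < 1` and `‖(η/n) x xᵀ‖₂ > (1/2)·1/(1-ηλ)`, the operator norm of the central
binomial term `binom(t, t/2)(1-ηλ)^{t/2}(-(2η/n) x xᵀ)^{t/2}` (with `t = 2k`
even) tends to infinity as `t → ∞`. -/
theorem stmt17 (m n : ℕ) (hn : 0 < n) (x : Fin m → ℝ) (hx : x ≠ 0)
    (η lam : ℝ) (hη : 0 < η) (hlam : 0 < lam) (hηlam : η * lam < 1)
    (hbig : ‖Matrix.toEuclideanCLM (𝕜 := ℝ)
        ((η / n) • Matrix.vecMulVec x x)‖ > 1 / 2 * (1 / (1 - η * lam))) :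
    Filter.Tendsto
      (fun k : ℕ => (((2 * k).choose k : ℕ) : ℝ) * (1 - η * lam) ^ k *
        ‖Matrix.toEuclideanCLM (𝕜 := ℝ)
          ((-((2 * η / n) • Matrix.vecMulVec x x)) ^ k)‖)
      Filter.atTop Filter.atTop := by
  set M : Matrix (Fin m) (Fin m) ℝ := Matrix.vecMulVec x x with hM
  set s : ℝ := x ⬝ᵥ x with hs
  have hnR : (0:ℝ) < n := by exact_mod_cast hn
  have hηn : (0:ℝ) < η / n := div_pos hη hnR
  have h1 : (0:ℝ) < 1 - η * lam := by linarith
  -- M * M = s • M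
  have hMM : M * M = s • M := by
    ext i j
    simp only [hM, Matrix.mul_apply, Matrix.vecMulVec_apply, Matrix.smul_apply, hs, smul_eq_mul]
    rw [show x ⬝ᵥ x = ∑ l, x l * x l from rfl, Finset.sum_mul]
    exact Finset.sum_congr rfl fun l _ => by ring
  -- powers of a • M
  have hpow : ∀ (a : ℝ) (k : ℕ), (a • M) ^ (k + 1) = (a ^ (k + 1) * s ^ k) • M := by
    intro a k
    induction k with
    | zero => simp
    | succ k ih =>
      rw [pow_succ, ih, smul_mul_assoc, mul_smul_comm, hMM, smul_smul, smul_smul]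
      congr 1; ring
  set c : ℝ := ‖Matrix.toEuclideanCLM (𝕜 := ℝ) M‖ with hc
  -- rewrite hbig
  have hbig' : η / n * c > 1 / 2 * (1 / (1 - η * lam)) := by
    have : ‖Matrix.toEuclideanCLM (𝕜 := ℝ) ((η / n) • M)‖ = η / n * c := by
      rw [map_smul, norm_smul (η / (n:ℝ)) (Matrix.toEuclideanCLM (𝕜 := ℝ) M),
        Real.norm_eq_abs, abs_of_pos hηn]
    rwa [this] at hbig
  have hcpos : 0 < c := by
    have h2 : (0:ℝ) < 1 / 2 * (1 / (1 - η * lam)) := by positivity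
    nlinarith
  -- the Euclidean vector
  set xE : EuclideanSpace ℝ (Fin m) := (WithLp.equiv 2 (Fin m → ℝ)).symm x with hxE
  have hsx : s = ‖xE‖ ^ 2 := by
    rw [← real_inner_self_eq_norm_sq, PiLp.inner_apply]
    simp only [RCLike.inner_apply, conj_trivial]
    rfl
  -- operator norm bound: c ≤ s
  have hcs : c ≤ s := by
    have hs0 : 0 ≤ s := by rw [hsx]; positivity
    apply ContinuousLinearMap.opNorm_le_bound _ hs0
    intro v
    have hv : Matrix.toEuclideanCLM (𝕜 := ℝ) M v
        = (WithLp.equiv 2 (Fin m → ℝ)).symm (M *ᵥ (WithLp.equiv 2 (Fin m → ℝ)) v) := rfl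
    have hmv : M *ᵥ (WithLp.equiv 2 (Fin m → ℝ)) v
        = (x ⬝ᵥ (WithLp.equiv 2 (Fin m → ℝ)) v) • x := by
      ext i
      simp only [hM, Matrix.mulVec, Matrix.vecMulVec_apply, Pi.smul_apply, smul_eq_mul,
        dotProduct]
      rw [Finset.sum_mul]
      exact Finset.sum_congr rfl fun l _ => by ring
    have hinner : x ⬝ᵥ (WithLp.equiv 2 (Fin m → ℝ)) v = inner ℝ xE v := by
      rw [PiLp.inner_apply]
      simp only [RCLike.inner_apply, conj_trivial]
      exact Finset.sum_congr rfl fun l _ => mul_comm _ _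
    rw [hv, hmv, hinner]
    have : (WithLp.equiv 2 (Fin m → ℝ)).symm ((inner ℝ xE v : ℝ) • x)
        = (inner ℝ xE v : ℝ) • xE := rfl
    rw [this, norm_smul, Real.norm_eq_abs]
    calc |(inner ℝ xE v : ℝ)| * ‖xE‖ ≤ ‖xE‖ * ‖v‖ * ‖xE‖ := by
          gcongr; exact abs_real_inner_le_norm xE v
      _ = s * ‖v‖ := by rw [hsx]; ring
  have hspos : 0 < s := lt_of_lt_of_le hcpos hcs
  -- the key ratio
  set q : ℝ := 2 * (1 - η * lam) * (η / n * c) with hq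
  have hq1 : 1 < q := by
    have h2 := mul_lt_mul_of_pos_left hbig'
      (show (0:ℝ) < 2 * (1 - η * lam) by positivity)
    calc (1:ℝ) = 2 * (1 - η * lam) * (1 / 2 * (1 / (1 - η * lam))) := by
          field_simp
      _ < q := h2
  -- eventual lower bound: q ^ k ≤ f k for k ≥ 1
  apply Filter.tendsto_atTop_mono' Filter.atTop _
    (tendsto_pow_atTop_atTop_of_one_lt hq1)
  filter_upwards [Filter.eventually_ge_atTop 1] with k hk
  obtain ⟨j, rfl⟩ : ∃ j, k = j + 1 := ⟨k - 1, (Nat.succ_pred_eq_of_pos hk).symm⟩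
  have hneg : (-((2 * η / n) • M)) = (-(2 * η / n)) • M := by
    rw [neg_smul]
  rw [hneg, hpow]
  have hnorm : ‖Matrix.toEuclideanCLM (𝕜 := ℝ)
      (((-(2 * η / n)) ^ (j + 1) * s ^ j) • M)‖
      = (2 * η / n) ^ (j + 1) * s ^ j * c := by
    rw [map_smul, norm_smul ((-(2 * η / (n:ℝ))) ^ (j + 1) * s ^ j)
        (Matrix.toEuclideanCLM (𝕜 := ℝ) M),
      Real.norm_eq_abs, abs_mul, abs_pow, abs_pow,
      abs_neg, abs_of_pos (by positivity : (0:ℝ) < 2 * η / n),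
      abs_of_pos hspos, hc]
  rw [hnorm]
  have hchoose : (1:ℝ) ≤ (((2 * (j+1)).choose (j+1) : ℕ) : ℝ) := by
    exact_mod_cast Nat.one_le_iff_ne_zero.mpr (Nat.choose_pos (by omega)).ne'
  have hcj : c ^ j ≤ s ^ j := pow_le_pow_left₀ hcpos.le hcs j
  calc q ^ (j+1) = 1 * ((1 - η * lam) ^ (j+1) * ((2 * η / n) ^ (j+1) * (c ^ j * c))) := by
        rw [one_mul, hq, show (2:ℝ) * η / n = 2 * (η / n) by ring, ← pow_succ]
        simp only [mul_pow]
        ring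
    _ ≤ (((2 * (j+1)).choose (j+1) : ℕ) : ℝ) *
        ((1 - η * lam) ^ (j+1) * ((2 * η / n) ^ (j+1) * (s ^ j * c))) := by
        apply mul_le_mul hchoose _ (by positivity) (by positivity)
        gcongr
    _ = (((2 * (j+1)).choose (j+1) : ℕ) : ℝ) * (1 - η * lam) ^ (j+1) *
        ((2 * η / n) ^ (j+1) * s ^ j * c) := by ring
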